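/- Let A be μ-strongly monotone and β-cocoercive on ℝ² (realized as multiplication by a complex number), and let z ∈ ℂ satisfy Re z ≥ μ and Re z ≥ β|z|². Then |((1+αz)⁻¹·2 − 1)|² ≤ 1 − 4αμ/(1 + 2αμ + α²μ/β) for every α > 0, with 0 < μ ≤ 1/β. Equivalently: the image of the region {z : Re z ≥ μ, Re z ≥ β|z|²} under z ↦ (1 − αz)/(1 + αz) is contained in the closed disk of radius √(1 − 4αμ/(1+2αμ+α²μ/β)) centered at 0. -/

import Mathlib

theorem srg_stmt14 (μ β α : ℝ) (hμ : 0 < μ) (hβ : 0 < β) (hα : 0 < α)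
    (hμβ : μ * β ≤ 1) :
    ∀ z : ℂ, μ ≤ z.re → β * ‖z‖ ^ 2 ≤ z.re →
      ‖(1 - α * z) / (1 + α * z)‖ ^ 2
        ≤ 1 - 4 * α * μ / (1 + 2 * α * μ + α ^ 2 * μ / β) := by
  intro z h1 h2
  set x := z.re with hx
  set y := z.im with hy
  have habs : ‖z‖ ^ 2 = x ^ 2 + y ^ 2 := by
    rw [Complex.sq_norm, Complex.normSq_apply]; ring
  rw [habs] at h2
  have hxpos : 0 < x := lt_of_lt_of_le hμ h1
  have key : ‖(1 - α * z) / (1 + α * z)‖ ^ 2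
      = ((1 - α * x) ^ 2 + (α * y) ^ 2) / ((1 + α * x) ^ 2 + (α * y) ^ 2) := by
    rw [norm_div, div_pow, Complex.sq_norm, Complex.sq_norm,
      Complex.normSq_apply, Complex.normSq_apply]
    simp [Complex.add_re, Complex.add_im, Complex.sub_re, Complex.sub_im,
      Complex.mul_re, Complex.mul_im, Complex.ofReal_re, Complex.ofReal_im]
    ring_nf
    rfl
  rw [key]
  have hd1 : 0 < (1 + α * x) ^ 2 + (α * y) ^ 2 := by positivity
  have hd2 : 0 < 1 + 2 * α * μ + α ^ 2 * μ / β := by positivity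
  rw [div_le_iff₀ hd1, sub_mul, one_mul, div_mul_eq_mul_div]
  have hkey : 4 * α * μ * ((1 + α * x) ^ 2 + (α * y) ^ 2) / (1 + 2 * α * μ + α ^ 2 * μ / β)
      ≤ ((1 + α * x) ^ 2 + (α * y) ^ 2) - ((1 - α * x) ^ 2 + (α * y) ^ 2) := by
    rw [div_le_iff₀ hd2]
    have hs : x ^ 2 + y ^ 2 ≤ x / β := by
      rw [le_div_iff₀ hβ]; linarith [mul_comm β (x^2+y^2)]
    have h4 : α ^ 2 * μ * (x ^ 2 + y ^ 2) ≤ α ^ 2 * μ * (x / β) :=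
      mul_le_mul_of_nonneg_left hs (by positivity)
    have h5 : α ^ 2 * μ * (x / β) = α ^ 2 * μ / β * x := by ring
    nlinarith [mul_nonneg (mul_nonneg hα.le hα.le) (mul_nonneg hμ.le (sub_nonneg.2 h1)),
      mul_nonneg hα.le (sub_nonneg.2 h1), sq_nonneg (α*y), mul_pos hα hxpos]
  linarith
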